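/- Let s ∈ ℂ^n with ‖s‖_2 = 1, let A be an n×K complex matrix, and let γ, M > 0 satisfy γ·‖v‖_2 ≤ ‖A v‖_2 ≤ M·‖v‖_2 for all v ∈ ℂ^K. Let ε₀, τ ≥ 0, let x ∈ ℂ^K be nonzero with ‖s − A x‖_2 ≤ ε₀, and let y ∈ ℂ^K satisfy ‖y − x/‖x‖_2‖_2 ≤ τ and A y ≠ 0. Then ‖s − (A y)/‖A y‖_2‖_2 ≤ 2·ε₀ + 2·(M/γ)·τ. -/

import Mathlib

open Matrix

/-- For nonzero vectors `a, b`, the distance between their normalizations is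
bounded by `2‖a - b‖ / ‖a‖`. -/
lemma normalize_sub_normalize_le {E : Type*} [NormedAddCommGroup E] [NormedSpace ℝ E]
    (a b : E) (ha : a ≠ 0) (hb : b ≠ 0) :
    ‖‖a‖⁻¹ • a - ‖b‖⁻¹ • b‖ ≤ 2 * ‖a - b‖ / ‖a‖ := by
  have ha' : (0:ℝ) < ‖a‖ := norm_pos_iff.mpr ha
  have hb' : (0:ℝ) < ‖b‖ := norm_pos_iff.mpr hb
  have key : ‖a‖⁻¹ • a - ‖b‖⁻¹ • b = ‖a‖⁻¹ • (a - b) + (‖a‖⁻¹ - ‖b‖⁻¹) • b := by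
    rw [smul_sub, sub_smul]; abel
  have h2 : |‖b‖ - ‖a‖| ≤ ‖a - b‖ := by
    rw [norm_sub_rev]; exact abs_norm_sub_norm_le b a
  have h1 : |‖a‖⁻¹ - ‖b‖⁻¹| * ‖b‖ ≤ ‖a - b‖ / ‖a‖ := by
    have he : ‖a‖⁻¹ - ‖b‖⁻¹ = (‖b‖ - ‖a‖) / (‖a‖ * ‖b‖) := by
      field_simp
    rw [he, abs_div, abs_of_pos (mul_pos ha' hb')]
    calc |‖b‖ - ‖a‖| / (‖a‖ * ‖b‖) * ‖b‖ = |‖b‖ - ‖a‖| / ‖a‖ := by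
          field_simp
      _ ≤ ‖a - b‖ / ‖a‖ := by gcongr
  calc ‖‖a‖⁻¹ • a - ‖b‖⁻¹ • b‖
      ≤ ‖‖a‖⁻¹ • (a - b)‖ + ‖(‖a‖⁻¹ - ‖b‖⁻¹) • b‖ := by rw [key]; exact norm_add_le _ _
    _ = ‖a‖⁻¹ * ‖a - b‖ + |‖a‖⁻¹ - ‖b‖⁻¹| * ‖b‖ := by
        rw [norm_smul, norm_smul, Real.norm_eq_abs, Real.norm_eq_abs,
          abs_of_pos (inv_pos.mpr ha')]
    _ ≤ 2 * ‖a - b‖ / ‖a‖ := by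
        have h3 : 2 * ‖a - b‖ / ‖a‖ = ‖a - b‖ / ‖a‖ + ‖a - b‖ / ‖a‖ := by ring
        rw [inv_mul_eq_div, h3]
        linarith [h1]

/-- Deterministic error-propagation core of the paper's Corollary "Sparse
coefficients tomography": if the unit vector `s` admits an ε₀-accurate sparse
representation `A x` and `y` is a τ-accurate estimate of the normalized
coefficient vector `x/‖x‖`, then the normalized reconstruction `A y/‖A y‖` is
`(2ε₀ + 2(M/γ)τ)`-accurate, where `γ, M` bound the singular values of `A`. -/
theorem sparse_coefficients_error_propagation {n K : ℕ}
    (s : EuclideanSpace ℂ (Fin n)) (hs : ‖s‖ = 1)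
    (A : Matrix (Fin n) (Fin K) ℂ) (γ M : ℝ) (hγ : 0 < γ) (hM : 0 < M)
    (hσ : ∀ v : EuclideanSpace ℂ (Fin K),
      γ * ‖v‖ ≤ ‖(show EuclideanSpace ℂ (Fin n) from WithLp.toLp 2 (A.mulVec v))‖ ∧
      ‖(show EuclideanSpace ℂ (Fin n) from WithLp.toLp 2 (A.mulVec v))‖ ≤ M * ‖v‖)
    (ε₀ τ : ℝ) (hε₀ : 0 ≤ ε₀) (hτ : 0 ≤ τ)
    (x : EuclideanSpace ℂ (Fin K)) (hx : x ≠ 0)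
    (hxs : ‖s - (show EuclideanSpace ℂ (Fin n) from WithLp.toLp 2 (A.mulVec x))‖ ≤ ε₀)
    (y : EuclideanSpace ℂ (Fin K)) (hy : ‖y - ‖x‖⁻¹ • x‖ ≤ τ)
    (hAy : (show EuclideanSpace ℂ (Fin n) from WithLp.toLp 2 (A.mulVec y)) ≠ 0) :
    ‖s - ‖(show EuclideanSpace ℂ (Fin n) from WithLp.toLp 2 (A.mulVec y))‖⁻¹ •
        (show EuclideanSpace ℂ (Fin n) from WithLp.toLp 2 (A.mulVec y))‖ ≤ 2 * ε₀ + 2 * (M / γ) * τ := by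
  have hnx : (0:ℝ) < ‖x‖ := norm_pos_iff.mpr hx
  set u : EuclideanSpace ℂ (Fin n) := WithLp.toLp 2 (A.mulVec x) with hu_def
  set w : EuclideanSpace ℂ (Fin n) := WithLp.toLp 2 (A.mulVec y) with hw_def
  set x' : EuclideanSpace ℂ (Fin K) := ‖x‖⁻¹ • x with hx'_def
  have hx'norm : ‖x'‖ = 1 := by
    rw [hx'_def, norm_smul, Real.norm_eq_abs, abs_of_pos (inv_pos.mpr hnx)]
    field_simp
  -- a = A x'
  set a : EuclideanSpace ℂ (Fin n) := WithLp.toLp 2 (A.mulVec x') with ha_def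
  have hmulVec_smul : ∀ (r : ℝ) (v : EuclideanSpace ℂ (Fin K)),
      (show EuclideanSpace ℂ (Fin n) from WithLp.toLp 2 (A.mulVec (r • v))) =
      r • (show EuclideanSpace ℂ (Fin n) from WithLp.toLp 2 (A.mulVec v)) := by
    intro r v
    show WithLp.toLp 2 (A.mulVec (r • v)) = r • WithLp.toLp 2 (A.mulVec v)
    rw [Matrix.mulVec_smul, WithLp.toLp_smul]
  have hau : a = ‖x‖⁻¹ • u := hmulVec_smul ‖x‖⁻¹ x
  have hu_pos : (0:ℝ) < ‖u‖ := lt_of_lt_of_le (mul_pos hγ hnx) (hσ x).1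
  have hu_ne : u ≠ 0 := norm_pos_iff.mp hu_pos
  have ha_ge : γ ≤ ‖a‖ := by
    have := (hσ x').1
    rwa [hx'norm, mul_one] at this
  have ha_pos : (0:ℝ) < ‖a‖ := lt_of_lt_of_le hγ ha_ge
  have ha_ne : a ≠ 0 := norm_pos_iff.mp ha_pos
  -- normalization invariance: ‖a‖⁻¹ • a = ‖u‖⁻¹ • u
  have hnorm_inv : ‖a‖⁻¹ • a = ‖u‖⁻¹ • u := by
    rw [hau, norm_smul, Real.norm_eq_abs, abs_of_pos (inv_pos.mpr hnx), smul_smul,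
      mul_inv, inv_inv]
    congr 1
    field_simp
  -- first part: ‖s - ‖u‖⁻¹ • u‖ ≤ 2ε₀
  have h_first : ‖s - ‖u‖⁻¹ • u‖ ≤ 2 * ε₀ := by
    have hnu1 : |‖u‖ - 1| ≤ ε₀ := by
      have : |‖u‖ - ‖s‖| ≤ ‖u - s‖ := abs_norm_sub_norm_le u s
      rw [hs, norm_sub_rev] at this
      exact this.trans hxs
    calc ‖s - ‖u‖⁻¹ • u‖ ≤ ‖s - u‖ + ‖u - ‖u‖⁻¹ • u‖ := by
          have := norm_sub_le_norm_sub_add_norm_sub s u (‖u‖⁻¹ • u)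
          exact this
      _ = ‖s - u‖ + |‖u‖ - 1| := by
          congr 1
          rw [show u - ‖u‖⁻¹ • u = (1 - ‖u‖⁻¹) • u by rw [sub_smul, one_smul],
            norm_smul, Real.norm_eq_abs]
          have hmul : (1 - ‖u‖⁻¹) * ‖u‖ = ‖u‖ - 1 := by field_simp
          rw [← abs_of_pos hu_pos, ← abs_mul, abs_of_pos hu_pos, hmul]
      _ ≤ ε₀ + ε₀ := add_le_add hxs hnu1
      _ = 2 * ε₀ := by ring
  -- second part
  have haw : ‖a - w‖ ≤ M * τ := by
    have : (a - w : EuclideanSpace ℂ (Fin n)) = WithLp.toLp 2 (A.mulVec (x' - y)) := by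
      show a - w = WithLp.toLp 2 (A.mulVec (x' - y))
      rw [ha_def, hw_def, Matrix.mulVec_sub, WithLp.toLp_sub]
    rw [this]
    calc ‖(show EuclideanSpace ℂ (Fin n) from WithLp.toLp 2 (A.mulVec (x' - y)))‖ ≤ M * ‖x' - y‖ :=
          (hσ (x' - y)).2
      _ ≤ M * τ := by
          have : ‖x' - y‖ = ‖y - x'‖ := norm_sub_rev _ _
          rw [this]
          exact mul_le_mul_of_nonneg_left hy hM.le
  have h_second : ‖‖u‖⁻¹ • u - ‖w‖⁻¹ • w‖ ≤ 2 * (M / γ) * τ := by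
    rw [← hnorm_inv]
    calc ‖‖a‖⁻¹ • a - ‖w‖⁻¹ • w‖ ≤ 2 * ‖a - w‖ / ‖a‖ :=
          normalize_sub_normalize_le a w ha_ne hAy
      _ ≤ 2 * (M * τ) / γ := by gcongr
      _ = 2 * (M / γ) * τ := by field_simp
  calc ‖s - ‖w‖⁻¹ • w‖ ≤ ‖s - ‖u‖⁻¹ • u‖ + ‖‖u‖⁻¹ • u - ‖w‖⁻¹ • w‖ :=
        norm_sub_le_norm_sub_add_norm_sub _ _ _
    _ ≤ 2 * ε₀ + 2 * (M / γ) * τ := add_le_add h_first h_second
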